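/- With the notation below, if b_0+b_2 ≢ b_1+b_3 (mod 2), then D_4(b)·D_4(c) ≡ 1 − 4(b_0b_2 + b_1b_3 + c_0c_2 + c_1c_3) (mod 16). -/

import Mathlib

open Matrix Complex

def D4 (x0 x1 x2 x3 : ℤ) : ℤ :=
  (Matrix.of ![![x0, x1, x2, x3], ![x3, x0, x1, x2], ![x2, x3, x0, x1], ![x1, x2, x3, x0]]).det

def bI (a : ℕ → ℤ) (i : ℕ) : ℤ := (a i + a (i + 8)) + (a (i + 4) + a (i + 12))

def cI (a : ℕ → ℤ) (i : ℕ) : ℤ := (a i + a (i + 8)) - (a (i + 4) + a (i + 12))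

private lemma sq_lift {x : ℤ} (r : ℤ) (h : x % 8 = r) : ((x : ZMod 16))^2 = ((r : ZMod 16))^2 := by
  obtain ⟨k, hk⟩ : ∃ k, x = r + 8 * k := ⟨x / 8, by omega⟩
  subst hk
  have : ((r + 8 * k : ℤ) : ZMod 16)^2 = ((r : ZMod 16))^2 + (16 : ZMod 16) * (k * r + 4 * k^2) := by
    push_cast; ring
  rw [this]
  have h16 : (16 : ZMod 16) = 0 := by decide
  rw [h16]; ring

private lemma sq_odd (x : ℤ) (h : x % 2 = 1) :
    ((x : ZMod 16))^2 = 1 ∨ ((x : ZMod 16))^2 = 9 := by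
  have h8 : x % 8 = 1 ∨ x % 8 = 3 ∨ x % 8 = 5 ∨ x % 8 = 7 := by omega
  rcases h8 with h8 | h8 | h8 | h8 <;> rw [sq_lift _ h8] <;> [left; right; right; left] <;> decide

private lemma sq_even (x : ℤ) (h : x % 2 = 0) :
    ((x : ZMod 16))^2 = 0 ∨ ((x : ZMod 16))^2 = 4 := by
  have h8 : x % 8 = 0 ∨ x % 8 = 2 ∨ x % 8 = 4 ∨ x % 8 = 6 := by omega
  rcases h8 with h8 | h8 | h8 | h8 <;> rw [sq_lift _ h8] <;> [left; right; left; right] <;> decide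

set_option maxHeartbeats 4000000 in
private lemma key (s t u v S T U V : ℤ)
    (hst : (s + t) % 2 = 1) (hsu : (s - u) % 2 = 0) (htv : (t - v) % 2 = 0)
    (hsS : (s - S) % 2 = 0) (htT : (t - T) % 2 = 0)
    (huU : (u - U) % 2 = 0) (hvV : (v - V) % 2 = 0) :
    (s^2 - t^2) * (u^2 + v^2) * ((S^2 - T^2) * (U^2 + V^2)) ≡
      1 - (s^2 + t^2 - u^2 - v^2 + (S^2 + T^2 - U^2 - V^2)) [ZMOD 16] := by
  have bridge : ∀ a b : ℤ, (a : ZMod 16) = b → a ≡ b [ZMOD 16] := fun a b hb => by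
    exact_mod_cast (ZMod.intCast_eq_intCast_iff a b 16).mp hb
  apply bridge
  push_cast
  rcases Int.even_or_odd s with hs | hs
  · have hs' : s % 2 = 0 := Int.even_iff.mp hs
    have hA := sq_even s (by omega)
    have hB := sq_odd t (by omega)
    have hC := sq_even u (by omega)
    have hD := sq_odd v (by omega)
    have hA' := sq_even S (by omega)
    have hB' := sq_odd T (by omega)
    have hC' := sq_even U (by omega)
    have hD' := sq_odd V (by omega)
    rcases hA with hA | hA <;> rcases hB with hB | hB <;> rcases hC with hC | hC <;>
      rcases hD with hD | hD <;> rcases hA' with hA' | hA' <;> rcases hB' with hB' | hB' <;>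
      rcases hC' with hC' | hC' <;> rcases hD' with hD' | hD' <;>
      rw [hA, hB, hC, hD, hA', hB', hC', hD'] <;> decide
  · have hs' : s % 2 = 1 := Int.odd_iff.mp hs
    have hA := sq_odd s (by omega)
    have hB := sq_even t (by omega)
    have hC := sq_odd u (by omega)
    have hD := sq_even v (by omega)
    have hA' := sq_odd S (by omega)
    have hB' := sq_even T (by omega)
    have hC' := sq_odd U (by omega)
    have hD' := sq_even V (by omega)
    rcases hA with hA | hA <;> rcases hB with hB | hB <;> rcases hC with hC | hC <;>
      rcases hD with hD | hD <;> rcases hA' with hA' | hA' <;> rcases hB' with hB' | hB' <;>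
      rcases hC' with hC' | hC' <;> rcases hD' with hD' | hD' <;>
      rw [hA, hB, hC, hD, hA', hB', hC', hD'] <;> decide

theorem stmt10 (a : ℕ → ℤ)
    (h : ¬ (bI a 0 + bI a 2 ≡ bI a 1 + bI a 3 [ZMOD 2])) :
    D4 (bI a 0) (bI a 1) (bI a 2) (bI a 3) * D4 (cI a 0) (cI a 1) (cI a 2) (cI a 3) ≡
      1 - 4 * (bI a 0 * bI a 2 + bI a 1 * bI a 3 + cI a 0 * cI a 2 + cI a 1 * cI a 3) [ZMOD 16] := by
  set b0 := bI a 0 with hb0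
  set b1 := bI a 1 with hb1
  set b2 := bI a 2 with hb2
  set b3 := bI a 3 with hb3
  set c0 := cI a 0 with hc0
  set c1 := cI a 1 with hc1
  set c2 := cI a 2 with hc2
  set c3 := cI a 3 with hc3
  have hd : ∀ x0 x1 x2 x3 : ℤ, D4 x0 x1 x2 x3 =
      ((x0 + x2)^2 - (x1 + x3)^2) * ((x0 - x2)^2 + (x1 - x3)^2) := by
    intro x0 x1 x2 x3
    simp [D4, Matrix.det_succ_row_zero, Fin.sum_univ_succ,
      show (Fin.succAbove 1 2 : Fin 4) = 3 from rfl,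
      show (Fin.succAbove 2 2 : Fin 4) = 3 from rfl,
      show (Fin.castSucc 2 : Fin 4) = 2 from rfl,
      show (Fin.succAbove 3 2 : Fin 4) = 2 from rfl]
    ring
  have hbc0 : b0 - c0 = 2 * (a 4 + a 12) := by simp [hb0, hc0, bI, cI]; ring
  have hbc1 : b1 - c1 = 2 * (a 5 + a 13) := by simp [hb1, hc1, bI, cI]; ring
  have hbc2 : b2 - c2 = 2 * (a 6 + a 14) := by simp [hb2, hc2, bI, cI]; ring
  have hbc3 : b3 - c3 = 2 * (a 7 + a 15) := by simp [hb3, hc3, bI, cI]; ring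
  have h' : ¬ ((b0 + b2) % 2 = (b1 + b3) % 2) := h
  have hk := key (b0 + b2) (b1 + b3) (b0 - b2) (b1 - b3) (c0 + c2) (c1 + c3) (c0 - c2) (c1 - c3)
    (by omega) (by omega) (by omega) (by omega) (by omega) (by omega) (by omega)
  have e1 : D4 b0 b1 b2 b3 * D4 c0 c1 c2 c3 =
      ((b0 + b2)^2 - (b1 + b3)^2) * ((b0 - b2)^2 + (b1 - b3)^2) *
        (((c0 + c2)^2 - (c1 + c3)^2) * ((c0 - c2)^2 + (c1 - c3)^2)) := by
    rw [hd, hd]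
  have e2 : 1 - 4 * (b0 * b2 + b1 * b3 + c0 * c2 + c1 * c3) =
      1 - ((b0 + b2)^2 + (b1 + b3)^2 - (b0 - b2)^2 - (b1 - b3)^2 +
        ((c0 + c2)^2 + (c1 + c3)^2 - (c0 - c2)^2 - (c1 - c3)^2)) := by ring
  rw [e1, e2]
  exact hk
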